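/- The set of weights of 12-variable Boolean functions of degree at most 6 of the form 0‖g₁‖g₂‖(g₁+g₂), where g₁, g₂ range over homogeneous degree-5 polynomials in 10 variables over F₂ (each a sum of at most three degree-5 monomials), contains every integer between 154 and 214 that is congruent to 2 modulo 4. -/

import Mathlib

/-- Boolean functions in `m` variables. -/
abbrev BF (m : ℕ) := (Fin m → ZMod 2) → ZMod 2

/-- Hamming weight of a Boolean function. -/
def wt {m : ℕ} (f : BF m) : ℕ := (Finset.univ.filter fun x => f x = 1).card

/-- `f` has algebraic degree at most `r`: it is represented by a polynomial of total degree `≤ r`. -/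
def degLE {m : ℕ} (f : BF m) (r : ℕ) : Prop :=
  ∃ p : MvPolynomial (Fin m) (ZMod 2), p.totalDegree ≤ r ∧ ∀ x, MvPolynomial.eval x p = f x

/-- The monomial Boolean function with support `I`. -/
def mono {m : ℕ} (I : Finset (Fin m)) : BF m := fun x => ∏ i ∈ I, x i

/-- Concatenation `f₁‖f₂‖f₃‖f₄` of four `m`-variable functions into an `(m+2)`-variable function. -/
def concat4 {m : ℕ} (f1 f2 f3 f4 : BF m) : BF (m + 2) := fun x =>
  (1 + x ⟨m, by omega⟩) * (1 + x ⟨m + 1, by omega⟩) * f1 (fun i => x (Fin.castLE (by omega) i))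
  + x ⟨m, by omega⟩ * (1 + x ⟨m + 1, by omega⟩) * f2 (fun i => x (Fin.castLE (by omega) i))
  + (1 + x ⟨m, by omega⟩) * x ⟨m + 1, by omega⟩ * f3 (fun i => x (Fin.castLE (by omega) i))
  + x ⟨m, by omega⟩ * x ⟨m + 1, by omega⟩ * f4 (fun i => x (Fin.castLE (by omega) i))

/-- Concatenation `f‖g` of two `m`-variable functions into an `(m+1)`-variable function. -/
def concat2 {m : ℕ} (f g : BF m) : BF (m + 1) := fun x =>
  (1 + x (Fin.last m)) * f (fun i => x i.castSucc) + x (Fin.last m) * g (fun i => x i.castSucc)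

/-- `g` is a sum of at most three degree-5 monomials (a homogeneous degree-5 polynomial as in
Construction 1). -/
def homog5 (g : BF 10) : Prop :=
  ∃ S : Finset (Finset (Fin 10)), S.card ≤ 3 ∧ (∀ I ∈ S, I.card = 5) ∧
    ∀ x, g x = ∑ I ∈ S, ∏ i ∈ I, x i

set_option maxHeartbeats 1000000
set_option maxRecDepth 4000

def snocEquiv (m : ℕ) : ((Fin m → ZMod 2) × ZMod 2) ≃ (Fin (m+1) → ZMod 2) :=
  { toFun := fun p => Fin.snoc p.1 p.2
    invFun := fun x => (Fin.init x, x (Fin.last m))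
    left_inv := fun p => by simp [Fin.init_snoc, Fin.snoc_last]
    right_inv := fun x => by simp [Fin.snoc_init_self] }

lemma concat2_snoc {m : ℕ} (f g : BF m) (y : Fin m → ZMod 2) (b : ZMod 2) :
    concat2 f g (Fin.snoc y b) = (1 + b) * f y + b * g y := by
  have h1 : (fun i => (Fin.snoc y b : Fin (m+1) → ZMod 2) (Fin.castSucc i)) = y :=
    funext fun i => Fin.snoc_castSucc ..
  simp only [concat2, Fin.snoc_last, h1]

lemma wt_concat2 {m : ℕ} (f g : BF m) : wt (concat2 f g) = wt f + wt g := by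
  classical
  set e := snocEquiv m with he
  have hsum : ∀ h : BF (m+1), wt h = ∑ p : (Fin m → ZMod 2) × ZMod 2,
      if h (e p) = 1 then 1 else 0 := by
    intro h
    rw [wt, Finset.card_filter]
    exact (Fintype.sum_equiv e _ _ (fun p => rfl)).symm
  rw [hsum, Fintype.sum_prod_type]
  have huniv : (Finset.univ : Finset (ZMod 2)) = {0, 1} := rfl
  have key : ∀ y : Fin m → ZMod 2,
      (∑ b : ZMod 2, if concat2 f g (e (y, b)) = 1 then 1 else 0)
      = (if f y = 1 then 1 else 0) + (if g y = 1 then 1 else 0) := by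
    intro y
    rw [huniv, Finset.sum_insert (by decide), Finset.sum_singleton]
    have he0 : e (y, 0) = Fin.snoc y 0 := rfl
    have he1 : e (y, 1) = Fin.snoc y 1 := rfl
    have h0 : concat2 f g (e (y, 0)) = f y := by
      rw [he0, concat2_snoc]
      have : ∀ u v : ZMod 2, (1+0) * u + 0 * v = u := by decide
      exact this _ _
    have h1 : concat2 f g (e (y, 1)) = g y := by
      rw [he1, concat2_snoc]
      have : ∀ u v : ZMod 2, (1+1) * u + 1 * v = v := by decide
      exact this _ _
    rw [h0, h1]
  calc (∑ y : Fin m → ZMod 2, ∑ b : ZMod 2, if concat2 f g (e (y, b)) = 1 then 1 else 0)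
      = ∑ y : Fin m → ZMod 2, ((if f y = 1 then 1 else 0) + (if g y = 1 then 1 else 0)) :=
        Finset.sum_congr rfl fun y _ => key y
    _ = wt f + wt g := by
        rw [Finset.sum_add_distrib, wt, wt, Finset.card_filter, Finset.card_filter]

lemma concat4_eq {m : ℕ} (f1 f2 f3 f4 : BF m) :
    concat4 f1 f2 f3 f4 = concat2 (concat2 f1 f2) (concat2 f3 f4) := by
  funext x
  show _ = (1 + x (Fin.last (m+1))) * concat2 f1 f2 (fun i => x i.castSucc)
      + x (Fin.last (m+1)) * concat2 f3 f4 (fun i => x i.castSucc)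
  have h1 : (fun i : Fin m => x ((Fin.castSucc i).castSucc))
      = (fun i : Fin m => x (Fin.castLE (by omega) i)) := rfl
  have h2 : x ((Fin.last m).castSucc) = x ⟨m, by omega⟩ := rfl
  have h3 : x (Fin.last (m+1)) = x ⟨m + 1, by omega⟩ := rfl
  simp only [concat2, concat4, h1, h2, h3]
  ring

lemma wt_zero {m : ℕ} : wt (0 : BF m) = 0 := by simp [wt]

lemma wt_split {m : ℕ} (f g : BF m) :
    wt (concat4 0 f g (f + g)) = wt f + wt g + wt (f + g) := by
  rw [concat4_eq, wt_concat2, wt_concat2, wt_concat2, wt_zero]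
  omega

def gS (S : Finset (Finset (Fin 10))) : BF 10 := fun x => ∑ I ∈ S, ∏ i ∈ I, x i

noncomputable def pS (S : Finset (Finset (Fin 10))) : MvPolynomial (Fin 12) (ZMod 2) :=
  ∑ I ∈ S, ∏ i ∈ I, MvPolynomial.X (Fin.castLE (by omega) i)

lemma pS_totalDegree (S : Finset (Finset (Fin 10))) (h : ∀ I ∈ S, I.card = 5) :
    (pS S).totalDegree ≤ 5 := by
  refine le_trans (MvPolynomial.totalDegree_finset_sum _ _) ?_
  refine Finset.sup_le fun I hI => ?_
  refine le_trans (MvPolynomial.totalDegree_finset_prod _ _) ?_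
  calc (∑ i ∈ I, (MvPolynomial.X (σ := Fin 12) (R := ZMod 2)
        (Fin.castLE (by omega) i)).totalDegree) ≤ ∑ _i ∈ I, 1 :=
        Finset.sum_le_sum fun i _ => le_of_eq (MvPolynomial.totalDegree_X _)
    _ = I.card := by simp
    _ ≤ 5 := le_of_eq (h I hI)

lemma pS_eval (S : Finset (Finset (Fin 10))) (x : Fin 12 → ZMod 2) :
    MvPolynomial.eval x (pS S) = gS S (fun i => x (Fin.castLE (by omega) i)) := by
  simp [pS, gS]

lemma degLE_concat (S1 S2 : Finset (Finset (Fin 10)))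
    (h1 : ∀ I ∈ S1, I.card = 5) (h2 : ∀ I ∈ S2, I.card = 5) :
    degLE (concat4 0 (gS S1) (gS S2) (gS S1 + gS S2)) 6 := by
  refine ⟨MvPolynomial.X ⟨10, by omega⟩ * pS S1 + MvPolynomial.X ⟨11, by omega⟩ * pS S2, ?_, ?_⟩
  · refine le_trans (MvPolynomial.totalDegree_add _ _) (max_le ?_ ?_) <;>
    · refine le_trans (MvPolynomial.totalDegree_mul _ _) ?_
      have := MvPolynomial.totalDegree_X (R := ZMod 2) (σ := Fin 12)
      calc _ ≤ 1 + 5 := by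
              gcongr
              · exact le_of_eq (this _)
              · first | exact pS_totalDegree S1 h1 | exact pS_totalDegree S2 h2
        _ ≤ 6 := by norm_num
  · intro x
    rw [map_add, map_mul, map_mul, MvPolynomial.eval_X, MvPolynomial.eval_X, pS_eval, pS_eval]
    show _ = concat4 0 (gS S1) (gS S2) (gS S1 + gS S2) x
    simp only [concat4, Pi.add_apply, Pi.zero_apply]
    have key : ∀ a b u v : ZMod 2,
        (1 + a) * (1 + b) * 0 + a * (1 + b) * u + (1 + a) * b * v + a * b * (u + v)
        = a * u + b * v := by decide
    exact (key _ _ _ _).symm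

lemma build (S1 S2 : Finset (Finset (Fin 10))) (hc1 : S1.card ≤ 3) (hc2 : S2.card ≤ 3)
    (h5a : ∀ I ∈ S1, I.card = 5) (h5b : ∀ I ∈ S2, I.card = 5) {w : ℕ}
    (hw : wt (gS S1) + wt (gS S2) + wt (gS S1 + gS S2) = w) :
    ∃ g1 g2 : BF 10, homog5 g1 ∧ homog5 g2 ∧ degLE (concat4 0 g1 g2 (g1 + g2)) 6 ∧
      wt (concat4 0 g1 g2 (g1 + g2)) = w :=
  ⟨gS S1, gS S2, ⟨S1, hc1, h5a, fun _ => rfl⟩, ⟨S2, hc2, h5b, fun _ => rfl⟩,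
   degLE_concat S1 S2 h5a h5b, by rw [wt_split]; exact hw⟩


def mkS (l : List (Finset (Fin 10))) (h : l.Nodup) : Finset (Finset (Fin 10)) := ⟨↑l, h⟩

lemma ne_of_elem {I J : Finset (Fin 10)} (j : Fin 10) (h1 : j ∈ I) (h2 : j ∉ J) : I ≠ J :=
  fun h => h2 (h ▸ h1)

def Ja : Finset (Fin 10) := {0,1,2,3,4}
def Jb : Finset (Fin 10) := {5,6,7,8,9}
def Jc : Finset (Fin 10) := {0,1,2,3,5}
def Jd : Finset (Fin 10) := {0,1,2,5,6}
def Je : Finset (Fin 10) := {0,2,4,6,8}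
def Jf : Finset (Fin 10) := {1,3,5,7,9}
def Jg : Finset (Fin 10) := {0,1,2,4,6}
def Jh : Finset (Fin 10) := {1,2,3,4,5}
def Ji : Finset (Fin 10) := {2,3,4,5,6}
def Jj : Finset (Fin 10) := {3,4,5,6,7}
def Jk : Finset (Fin 10) := {4,5,6,7,8}

lemma neac : Ja ≠ Jc := ne_of_elem 4 (by decide) (by decide)
lemma neae : Ja ≠ Je := ne_of_elem 1 (by decide) (by decide)
lemma neag : Ja ≠ Jg := ne_of_elem 3 (by decide) (by decide)
lemma neah : Ja ≠ Jh := ne_of_elem 0 (by decide) (by decide)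
lemma neai : Ja ≠ Ji := ne_of_elem 0 (by decide) (by decide)
lemma nebd : Jb ≠ Jd := ne_of_elem 7 (by decide) (by decide)
lemma nebe : Jb ≠ Je := ne_of_elem 5 (by decide) (by decide)
lemma nebf : Jb ≠ Jf := ne_of_elem 6 (by decide) (by decide)
lemma nebg : Jb ≠ Jg := ne_of_elem 5 (by decide) (by decide)
lemma nebi : Jb ≠ Ji := ne_of_elem 7 (by decide) (by decide)
lemma nebj : Jb ≠ Jj := ne_of_elem 8 (by decide) (by decide)
lemma nebk : Jb ≠ Jk := ne_of_elem 9 (by decide) (by decide)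
lemma necd : Jc ≠ Jd := ne_of_elem 3 (by decide) (by decide)
lemma nece : Jc ≠ Je := ne_of_elem 1 (by decide) (by decide)
lemma necf : Jc ≠ Jf := ne_of_elem 0 (by decide) (by decide)
lemma necg : Jc ≠ Jg := ne_of_elem 3 (by decide) (by decide)
lemma nede : Jd ≠ Je := ne_of_elem 1 (by decide) (by decide)
lemma nedf : Jd ≠ Jf := ne_of_elem 0 (by decide) (by decide)
lemma neef : Je ≠ Jf := ne_of_elem 0 (by decide) (by decide)
lemma neeg : Je ≠ Jg := ne_of_elem 8 (by decide) (by decide)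
lemma nefg : Jf ≠ Jg := ne_of_elem 3 (by decide) (by decide)
lemma nehg : Jh ≠ Jg := ne_of_elem 3 (by decide) (by decide)
lemma neig : Ji ≠ Jg := ne_of_elem 3 (by decide) (by decide)
lemma nekj : Jk ≠ Jj := ne_of_elem 8 (by decide) (by decide)

def Sac : Finset (Finset (Fin 10)) := mkS [Ja, Jc] (by simp [neac])
lemma cardSac : Sac.card ≤ 3 := by decide
lemma all5Sac : ∀ I ∈ Sac, I.card = 5 := by
  intro I hI
  rcases (by simpa using (show I ∈ [Ja, Jc] from hI) : I = Ja ∨ I = Jc) with rfl|rfl <;> decide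
lemma wtSac : wt (gS Sac) = 32 := by decide

def Sace : Finset (Finset (Fin 10)) := mkS [Ja, Jc, Je] (by simp [neac, neae, nece])
lemma cardSace : Sace.card ≤ 3 := by decide
lemma all5Sace : ∀ I ∈ Sace, I.card = 5 := by
  intro I hI
  rcases (by simpa using (show I ∈ [Ja, Jc, Je] from hI) : I = Ja ∨ I = Jc ∨ I = Je) with rfl|rfl|rfl <;> decide
lemma wtSace : wt (gS Sace) = 56 := by decide

def Sacg : Finset (Finset (Fin 10)) := mkS [Ja, Jc, Jg] (by simp [neac, neag, necg])
lemma cardSacg : Sacg.card ≤ 3 := by decide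
lemma all5Sacg : ∀ I ∈ Sacg, I.card = 5 := by
  intro I hI
  rcases (by simpa using (show I ∈ [Ja, Jc, Jg] from hI) : I = Ja ∨ I = Jc ∨ I = Jg) with rfl|rfl|rfl <;> decide
lemma wtSacg : wt (gS Sacg) = 48 := by decide

def Sag : Finset (Finset (Fin 10)) := mkS [Ja, Jg] (by simp [neag])
lemma cardSag : Sag.card ≤ 3 := by decide
lemma all5Sag : ∀ I ∈ Sag, I.card = 5 := by
  intro I hI
  rcases (by simpa using (show I ∈ [Ja, Jg] from hI) : I = Ja ∨ I = Jg) with rfl|rfl <;> decide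
lemma wtSag : wt (gS Sag) = 32 := by decide

def Sah : Finset (Finset (Fin 10)) := mkS [Ja, Jh] (by simp [neah])
lemma cardSah : Sah.card ≤ 3 := by decide
lemma all5Sah : ∀ I ∈ Sah, I.card = 5 := by
  intro I hI
  rcases (by simpa using (show I ∈ [Ja, Jh] from hI) : I = Ja ∨ I = Jh) with rfl|rfl <;> decide
lemma wtSah : wt (gS Sah) = 32 := by decide

def Sahg : Finset (Finset (Fin 10)) := mkS [Ja, Jh, Jg] (by simp [neah, neag, nehg])
lemma cardSahg : Sahg.card ≤ 3 := by decide
lemma all5Sahg : ∀ I ∈ Sahg, I.card = 5 := by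
  intro I hI
  rcases (by simpa using (show I ∈ [Ja, Jh, Jg] from hI) : I = Ja ∨ I = Jh ∨ I = Jg) with rfl|rfl|rfl <;> decide
lemma wtSahg : wt (gS Sahg) = 48 := by decide

def Sai : Finset (Finset (Fin 10)) := mkS [Ja, Ji] (by simp [neai])
lemma cardSai : Sai.card ≤ 3 := by decide
lemma all5Sai : ∀ I ∈ Sai, I.card = 5 := by
  intro I hI
  rcases (by simpa using (show I ∈ [Ja, Ji] from hI) : I = Ja ∨ I = Ji) with rfl|rfl <;> decide
lemma wtSai : wt (gS Sai) = 48 := by decide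

def Saig : Finset (Finset (Fin 10)) := mkS [Ja, Ji, Jg] (by simp [neai, neag, neig])
lemma cardSaig : Saig.card ≤ 3 := by decide
lemma all5Saig : ∀ I ∈ Saig, I.card = 5 := by
  intro I hI
  rcases (by simpa using (show I ∈ [Ja, Ji, Jg] from hI) : I = Ja ∨ I = Ji ∨ I = Jg) with rfl|rfl|rfl <;> decide
lemma wtSaig : wt (gS Saig) = 64 := by decide

def Sbde : Finset (Finset (Fin 10)) := mkS [Jb, Jd, Je] (by simp [nebd, nebe, nede])
lemma cardSbde : Sbde.card ≤ 3 := by decide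
lemma all5Sbde : ∀ I ∈ Sbde, I.card = 5 := by
  intro I hI
  rcases (by simpa using (show I ∈ [Jb, Jd, Je] from hI) : I = Jb ∨ I = Jd ∨ I = Je) with rfl|rfl|rfl <;> decide
lemma wtSbde : wt (gS Sbde) = 72 := by decide

def Sbdf : Finset (Finset (Fin 10)) := mkS [Jb, Jd, Jf] (by simp [nebd, nebf, nedf])
lemma cardSbdf : Sbdf.card ≤ 3 := by decide
lemma all5Sbdf : ∀ I ∈ Sbdf, I.card = 5 := by
  intro I hI
  rcases (by simpa using (show I ∈ [Jb, Jd, Jf] from hI) : I = Jb ∨ I = Jd ∨ I = Jf) with rfl|rfl|rfl <;> decide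
lemma wtSbdf : wt (gS Sbdf) = 72 := by decide

def Sbg : Finset (Finset (Fin 10)) := mkS [Jb, Jg] (by simp [nebg])
lemma cardSbg : Sbg.card ≤ 3 := by decide
lemma all5Sbg : ∀ I ∈ Sbg, I.card = 5 := by
  intro I hI
  rcases (by simpa using (show I ∈ [Jb, Jg] from hI) : I = Jb ∨ I = Jg) with rfl|rfl <;> decide
lemma wtSbg : wt (gS Sbg) = 60 := by decide

def Sbi : Finset (Finset (Fin 10)) := mkS [Jb, Ji] (by simp [nebi])
lemma cardSbi : Sbi.card ≤ 3 := by decide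
lemma all5Sbi : ∀ I ∈ Sbi, I.card = 5 := by
  intro I hI
  rcases (by simpa using (show I ∈ [Jb, Ji] from hI) : I = Jb ∨ I = Ji) with rfl|rfl <;> decide
lemma wtSbi : wt (gS Sbi) = 56 := by decide

def Sbkj : Finset (Finset (Fin 10)) := mkS [Jb, Jk, Jj] (by simp [nebk, nebj, nekj])
lemma cardSbkj : Sbkj.card ≤ 3 := by decide
lemma all5Sbkj : ∀ I ∈ Sbkj, I.card = 5 := by
  intro I hI
  rcases (by simpa using (show I ∈ [Jb, Jk, Jj] from hI) : I = Jb ∨ I = Jk ∨ I = Jj) with rfl|rfl|rfl <;> decide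
lemma wtSbkj : wt (gS Sbkj) = 48 := by decide

def Scdf : Finset (Finset (Fin 10)) := mkS [Jc, Jd, Jf] (by simp [necd, necf, nedf])
lemma cardScdf : Scdf.card ≤ 3 := by decide
lemma all5Scdf : ∀ I ∈ Scdf, I.card = 5 := by
  intro I hI
  rcases (by simpa using (show I ∈ [Jc, Jd, Jf] from hI) : I = Jc ∨ I = Jd ∨ I = Jf) with rfl|rfl|rfl <;> decide
lemma wtScdf : wt (gS Scdf) = 56 := by decide

def Sdef : Finset (Finset (Fin 10)) := mkS [Jd, Je, Jf] (by simp [nede, nedf, neef])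
lemma cardSdef : Sdef.card ≤ 3 := by decide
lemma all5Sdef : ∀ I ∈ Sdef, I.card = 5 := by
  intro I hI
  rcases (by simpa using (show I ∈ [Jd, Je, Jf] from hI) : I = Jd ∨ I = Je ∨ I = Jf) with rfl|rfl|rfl <;> decide
lemma wtSdef : wt (gS Sdef) = 74 := by decide

def Seg : Finset (Finset (Fin 10)) := mkS [Je, Jg] (by simp [neeg])
lemma cardSeg : Seg.card ≤ 3 := by decide
lemma all5Seg : ∀ I ∈ Seg, I.card = 5 := by
  intro I hI
  rcases (by simpa using (show I ∈ [Je, Jg] from hI) : I = Je ∨ I = Jg) with rfl|rfl <;> decide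
lemma wtSeg : wt (gS Seg) = 32 := by decide

def Sfg : Finset (Finset (Fin 10)) := mkS [Jf, Jg] (by simp [nefg])
lemma cardSfg : Sfg.card ≤ 3 := by decide
lemma all5Sfg : ∀ I ∈ Sfg, I.card = 5 := by
  intro I hI
  rcases (by simpa using (show I ∈ [Jf, Jg] from hI) : I = Jf ∨ I = Jg) with rfl|rfl <;> decide
lemma wtSfg : wt (gS Sfg) = 60 := by decide

lemma wtCfg_eg : wt (gS Sfg + gS Seg) = 62 := by decide
lemma wtCag_bkj : wt (gS Sag + gS Sbkj) = 78 := by decide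
lemma wtCbi_ah : wt (gS Sbi + gS Sah) = 74 := by decide
lemma wtCbi_ai : wt (gS Sbi + gS Sai) = 62 := by decide
lemma wtCahg_bg : wt (gS Sahg + gS Sbg) = 62 := by decide
lemma wtCbi_ag : wt (gS Sbi + gS Sag) = 86 := by decide
lemma wtCbi_ahg : wt (gS Sbi + gS Sahg) = 74 := by decide
lemma wtCbi_aig : wt (gS Sbi + gS Saig) = 62 := by decide
lemma wtCbde_ac : wt (gS Sbde + gS Sac) = 82 := by decide
lemma wtCbde_ag : wt (gS Sbde + gS Sag) = 86 := by decide
lemma wtCbde_def : wt (gS Sbde + gS Sdef) = 48 := by decide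
lemma wtCbde_acg : wt (gS Sbde + gS Sacg) = 78 := by decide
lemma wtCbde_ace : wt (gS Sbde + gS Sace) = 74 := by decide
lemma wtCbde_bdf : wt (gS Sbde + gS Sbdf) = 62 := by decide
lemma wtCbde_ahg : wt (gS Sbde + gS Sahg) = 90 := by decide
lemma wtCbde_cdf : wt (gS Sbde + gS Scdf) = 86 := by decide

theorem stmt16 (w : ℕ) (h1 : 154 ≤ w) (h2 : w ≤ 214) (h3 : w % 4 = 2) :
    ∃ g1 g2 : BF 10, homog5 g1 ∧ homog5 g2 ∧
      degLE (concat4 0 g1 g2 (g1 + g2)) 6 ∧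
      wt (concat4 0 g1 g2 (g1 + g2)) = w := by
  have hw : w = 154 ∨ w = 158 ∨ w = 162 ∨ w = 166 ∨ w = 170 ∨ w = 174 ∨ w = 178 ∨ w = 182 ∨ w = 186 ∨ w = 190 ∨ w = 194 ∨ w = 198 ∨ w = 202 ∨ w = 206 ∨ w = 210 ∨ w = 214 := by omega
  rcases hw with rfl|rfl|rfl|rfl|rfl|rfl|rfl|rfl|rfl|rfl|rfl|rfl|rfl|rfl|rfl|rfl
  · exact build Sfg Seg cardSfg cardSeg all5Sfg all5Seg (by rw [wtSfg, wtSeg, wtCfg_eg])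
  · exact build Sag Sbkj cardSag cardSbkj all5Sag all5Sbkj (by rw [wtSag, wtSbkj, wtCag_bkj])
  · exact build Sbi Sah cardSbi cardSah all5Sbi all5Sah (by rw [wtSbi, wtSah, wtCbi_ah])
  · exact build Sbi Sai cardSbi cardSai all5Sbi all5Sai (by rw [wtSbi, wtSai, wtCbi_ai])
  · exact build Sahg Sbg cardSahg cardSbg all5Sahg all5Sbg (by rw [wtSahg, wtSbg, wtCahg_bg])
  · exact build Sbi Sag cardSbi cardSag all5Sbi all5Sag (by rw [wtSbi, wtSag, wtCbi_ag])
  · exact build Sbi Sahg cardSbi cardSahg all5Sbi all5Sahg (by rw [wtSbi, wtSahg, wtCbi_ahg])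
  · exact build Sbi Saig cardSbi cardSaig all5Sbi all5Saig (by rw [wtSbi, wtSaig, wtCbi_aig])
  · exact build Sbde Sac cardSbde cardSac all5Sbde all5Sac (by rw [wtSbde, wtSac, wtCbde_ac])
  · exact build Sbde Sag cardSbde cardSag all5Sbde all5Sag (by rw [wtSbde, wtSag, wtCbde_ag])
  · exact build Sbde Sdef cardSbde cardSdef all5Sbde all5Sdef (by rw [wtSbde, wtSdef, wtCbde_def])
  · exact build Sbde Sacg cardSbde cardSacg all5Sbde all5Sacg (by rw [wtSbde, wtSacg, wtCbde_acg])
  · exact build Sbde Sace cardSbde cardSace all5Sbde all5Sace (by rw [wtSbde, wtSace, wtCbde_ace])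
  · exact build Sbde Sbdf cardSbde cardSbdf all5Sbde all5Sbdf (by rw [wtSbde, wtSbdf, wtCbde_bdf])
  · exact build Sbde Sahg cardSbde cardSahg all5Sbde all5Sahg (by rw [wtSbde, wtSahg, wtCbde_ahg])
  · exact build Sbde Scdf cardSbde cardScdf all5Sbde all5Scdf (by rw [wtSbde, wtScdf, wtCbde_cdf])
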